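/- For any two transformation data (f, γ₁, γ₂, γ₃) and (f̄, γ̄₁, γ̄₂, γ̄₃), with all eight functions differentiable, and any pointwise data (G, Γ, p, ξ): T(f̄, γ̄₁, γ̄₂, γ̄₃)(T(f, γ₁, γ₂, γ₃)(G, Γ, p, ξ)) = T(f̄∘f, γ̄₁∘f + γ₁, γ̄₂∘f + γ₂, γ̄₃∘f + γ₃)(G, Γ, p, ξ), and T(id, 0, 0, 0) acts as the identity. In other words, the conformal and generalized almost-geodesic transformations (e1)–(e3) constitute a self-consistent group action on the triple (metric, connection, scalar field). -/
import Mathlib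


/-- Pointwise geometric data of the Palatini scalar-tensor theory at a fixed
spacetime point: a metric `G : V ≃ₗ[ℝ] V*`, connection coefficients
`Γ : V → V → V`, the value `p` of the scalar field `Φ`, and the value
`ξ ∈ V*` of the differential `dΦ`. -/
structure PointData (V : Type*) [AddCommGroup V] [Module ℝ V] where
  G : V ≃ₗ[ℝ] Module.Dual ℝ V
  Γ : V → V → V
  p : ℝ
  ξ : Module.Dual ℝ V

/-- The action `T(f, γ₁, γ₂, γ₃)` implementing the conformal and generalized
almost-geodesic transformations (e1)–(e3):
`G ↦ exp(2γ₁(p))•G`,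
`Γ(u,v) ↦ Γ(u,v) + γ₂'(p)(ξ(u)v + ξ(v)u) − γ₃'(p)(G u v)(G⁻¹ ξ)`,
`p ↦ f(p)`, `ξ ↦ f'(p)•ξ`. -/
noncomputable def PointData.act {V : Type*} [AddCommGroup V] [Module ℝ V]
    (f γ₁ γ₂ γ₃ : ℝ → ℝ) (d : PointData V) : PointData V where
  G := d.G.trans (LinearEquiv.smulOfNeZero ℝ (Module.Dual ℝ V)
        (Real.exp (2 * γ₁ d.p)) (Real.exp_ne_zero _))
  Γ := fun u v => d.Γ u v + deriv γ₂ d.p • (d.ξ u • v + d.ξ v • u)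
        - deriv γ₃ d.p • ((d.G u v) • d.G.symm d.ξ)
  p := f d.p
  ξ := deriv f d.p • d.ξ

/-- The conformal and generalized almost-geodesic transformations (e1)–(e3)
form a self-consistent group action on the triple (metric, connection, scalar
field): consecutive actions by `(f, γ₁, γ₂, γ₃)` and `(f̄, γ̄₁, γ̄₂, γ̄₃)` agree
with the action of the composite `(f̄∘f, γ̄₁∘f + γ₁, γ̄₂∘f + γ₂, γ̄₃∘f + γ₃)`,
and `(id, 0, 0, 0)` acts as the identity. -/
theorem pointData_act_group_action {V : Type*} [AddCommGroup V] [Module ℝ V]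
    (f γ₁ γ₂ γ₃ fb g₁ g₂ g₃ : ℝ → ℝ)
    (hf : Differentiable ℝ f) (hγ₁ : Differentiable ℝ γ₁)
    (hγ₂ : Differentiable ℝ γ₂) (hγ₃ : Differentiable ℝ γ₃)
    (hfb : Differentiable ℝ fb) (hg₁ : Differentiable ℝ g₁)
    (hg₂ : Differentiable ℝ g₂) (hg₃ : Differentiable ℝ g₃)
    (d : PointData V) :
    PointData.act fb g₁ g₂ g₃ (PointData.act f γ₁ γ₂ γ₃ d)
      = PointData.act (fb ∘ f) (g₁ ∘ f + γ₁) (g₂ ∘ f + γ₂) (g₃ ∘ f + γ₃) d ∧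
    PointData.act id 0 0 0 d = d := by
  obtain ⟨G, Γ, p, ξ⟩ := d
  constructor
  · simp only [PointData.act, PointData.mk.injEq]
    have hderiv2 : deriv (g₂ ∘ f + γ₂) p = deriv g₂ (f p) * deriv f p + deriv γ₂ p :=
      ((((hg₂ (f p)).hasDerivAt.comp p (hf p).hasDerivAt)).add (hγ₂ p).hasDerivAt).deriv
    have hderiv3 : deriv (g₃ ∘ f + γ₃) p = deriv g₃ (f p) * deriv f p + deriv γ₃ p :=
      ((((hg₃ (f p)).hasDerivAt.comp p (hf p).hasDerivAt)).add (hγ₃ p).hasDerivAt).deriv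
    refine ⟨?_, ?_, rfl, ?_⟩
    · apply LinearEquiv.ext; intro u
      apply LinearMap.ext; intro v
      simp only [LinearEquiv.trans_apply, LinearEquiv.smulOfNeZero_apply,
        LinearMap.smul_apply, smul_eq_mul, Pi.add_apply, Function.comp_apply,
        Units.smul_def, Units.val_mk0]
      rw [← mul_assoc, ← Real.exp_add]
      ring_nf
    · funext u v
      have hsymm : (G.trans (LinearEquiv.smulOfNeZero ℝ (Module.Dual ℝ V)
          (Real.exp (2 * γ₁ p)) (Real.exp_ne_zero _))).symm (deriv f p • ξ)
          = (deriv f p * (Real.exp (2 * γ₁ p))⁻¹) • G.symm ξ := by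
        rw [LinearEquiv.symm_trans_apply]
        simp only [LinearEquiv.smulOfNeZero_symm_apply, Units.smul_def,
          Units.val_inv_eq_inv_val, Units.val_mk0, smul_smul, map_smul]
      rw [hsymm]
      simp only [hderiv2, hderiv3, LinearEquiv.trans_apply,
        LinearEquiv.smulOfNeZero_apply, LinearMap.smul_apply, smul_smul, smul_add,
        LinearMap.add_apply, smul_eq_mul, Units.smul_def, Units.val_mk0]
      match_scalars <;> field_simp <;> ring
    · rw [deriv_comp p (hfb _) (hf p), smul_smul]
  · have h0 : deriv (0 : ℝ → ℝ) p = 0 := by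
      rw [show (0 : ℝ → ℝ) = fun _ => (0:ℝ) from rfl, deriv_const]
    simp only [PointData.act, PointData.mk.injEq, h0, Pi.zero_apply, mul_zero,
      Real.exp_zero, zero_smul, one_smul, add_zero, sub_zero, id_eq]
    refine ⟨?_, trivial, trivial, by rw [deriv_id, one_smul]⟩
    apply LinearEquiv.ext; intro u; apply LinearMap.ext; intro v
    simp [Units.smul_def]
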